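/- For every p = (p_x, p_r) ∈ ℝ × [0,∞), the double integral ∬_{x ∈ ℝ, y > 0, y > p^2 + p_x^2 - 2x p_x} 1/(e^{x^2 + y - p^2} - 1) dy dx is bounded above by √π · ∑_{k≥1} k^{-3/2}, where p^2 = p_x^2 + p_r^2; in particular the bound is finite and independent of p. -/

import Mathlib

open MeasureTheory Set Real

lemma aux_summable_exp {t : ℝ} (ht : 0 < t) :
    Summable (fun k : ℕ+ => Real.exp (-(k : ℝ) * t)) := by
  have h : (fun k : ℕ+ => Real.exp (-(k : ℝ) * t)) =
      (fun n : ℕ => Real.exp (-t) ^ n) ∘ (fun k : ℕ+ => (k : ℕ)) := by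
    funext k
    simp only [Function.comp_apply, ← Real.exp_nat_mul]
    congr 1
    ring
  rw [h]
  exact (summable_geometric_of_lt_one (Real.exp_nonneg _)
    (Real.exp_lt_one_iff.mpr (by linarith))).comp_injective PNat.coe_injective

lemma aux_tsum_exp {t : ℝ} (ht : 0 < t) :
    ∑' k : ℕ+, Real.exp (-(k : ℝ) * t) = (Real.exp t - 1)⁻¹ := by
  have h1 : 1 < Real.exp t := Real.one_lt_exp_iff.mpr ht
  have hr1 : Real.exp (-t) < 1 := Real.exp_lt_one_iff.mpr (by linarith)
  have he := (Equiv.pnatEquivNat.symm.tsum_eq (fun k : ℕ+ => Real.exp (-(k : ℝ) * t))).symm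
  rw [he]
  have hterm : ∀ n : ℕ, Real.exp (-((Equiv.pnatEquivNat.symm n : ℕ+) : ℝ) * t)
      = Real.exp (-t) * Real.exp (-t) ^ n := by
    intro n
    have : ((Equiv.pnatEquivNat.symm n : ℕ+) : ℝ) = (n : ℝ) + 1 := by
      simp [Equiv.pnatEquivNat, Nat.succPNat]
    rw [this, ← Real.exp_nat_mul, ← Real.exp_add]
    congr 1
    ring
  simp_rw [hterm]
  rw [tsum_mul_left, tsum_geometric_of_lt_one (Real.exp_nonneg _) hr1]
  have h2 : Real.exp t - 1 ≠ 0 := by linarith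
  have h3 : 1 - Real.exp (-t) ≠ 0 := by linarith
  rw [Real.exp_neg] at *
  field_simp

lemma aux_exp_decay (c : ℝ) (k : ℕ+) :
    (∫⁻ y in Ioi c, ENNReal.ofReal (Real.exp (-(k : ℝ) * (y - c)))) = ENNReal.ofReal ((k : ℝ)⁻¹) := by
  have hk : (0 : ℝ) < (k : ℝ) := by exact_mod_cast k.pos
  have heq : (fun y : ℝ => Real.exp (-(k : ℝ) * (y - c)))
      = fun y : ℝ => Real.exp ((k : ℝ) * c) * Real.exp (-((k : ℝ) * y)) := by
    funext y
    rw [← Real.exp_add]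
    congr 1
    ring
  have hint : IntegrableOn (fun y : ℝ => Real.exp (-(k : ℝ) * (y - c))) (Ioi c) := by
    rw [heq]
    have h := (exp_neg_integrableOn_Ioi c hk).const_mul (Real.exp ((k : ℝ) * c))
    simp only [neg_mul] at h
    exact h
  rw [← ofReal_integral_eq_lintegral_ofReal hint (ae_of_all _ fun y => Real.exp_nonneg _)]
  congr 1
  rw [heq, MeasureTheory.integral_const_mul,
    integral_comp_mul_left_Ioi (fun u => Real.exp (-u)) c hk,
    integral_exp_neg_Ioi, smul_eq_mul, mul_left_comm, ← Real.exp_add]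
  simp

lemma aux_inner (P px x : ℝ) (k : ℕ+) :
    (∫⁻ y in Ioi (max 0 (P + px ^ 2 - 2 * x * px)),
        ENNReal.ofReal (Real.exp (-(k : ℝ) * (x ^ 2 + y - P)))) ≤
      ENNReal.ofReal (Real.exp (-(k : ℝ) * (x - px) ^ 2) * (k : ℝ)⁻¹) := by
  set c : ℝ := P + px ^ 2 - 2 * x * px with hc
  have h1 : (∫⁻ y in Ioi (max 0 c), ENNReal.ofReal (Real.exp (-(k : ℝ) * (x ^ 2 + y - P))))
      ≤ ∫⁻ y in Ioi c, ENNReal.ofReal (Real.exp (-(k : ℝ) * (x ^ 2 + y - P))) :=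
    lintegral_mono_set (Ioi_subset_Ioi (le_max_right 0 c))
  have h2 : (∫⁻ y in Ioi c, ENNReal.ofReal (Real.exp (-(k : ℝ) * (x ^ 2 + y - P))))
      = ∫⁻ y in Ioi c, ENNReal.ofReal (Real.exp (-(k : ℝ) * (x - px) ^ 2)) *
          ENNReal.ofReal (Real.exp (-(k : ℝ) * (y - c))) := by
    apply lintegral_congr
    intro y
    rw [← ENNReal.ofReal_mul (Real.exp_nonneg _), ← Real.exp_add]
    congr 2
    ring
  have h3 : (∫⁻ y in Ioi c, ENNReal.ofReal (Real.exp (-(k : ℝ) * (x - px) ^ 2)) *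
          ENNReal.ofReal (Real.exp (-(k : ℝ) * (y - c))))
      = ENNReal.ofReal (Real.exp (-(k : ℝ) * (x - px) ^ 2)) *
          ∫⁻ y in Ioi c, ENNReal.ofReal (Real.exp (-(k : ℝ) * (y - c))) := by
    apply lintegral_const_mul
    fun_prop
  rw [h2, h3, aux_exp_decay c k, ← ENNReal.ofReal_mul (Real.exp_nonneg _)] at h1
  exact h1

lemma aux_rpow (k : ℕ+) : Real.sqrt (Real.pi / (k : ℝ)) * (k : ℝ)⁻¹
    = Real.sqrt Real.pi * (k : ℝ) ^ (-(3 : ℝ) / 2) := by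
  have hk : (0 : ℝ) < (k : ℝ) := by exact_mod_cast k.pos
  have h2 : (k : ℝ) ^ (-(3 : ℝ) / 2) = ((k : ℝ) * Real.sqrt (k : ℝ))⁻¹ := by
    rw [show -(3 : ℝ)/2 = -(1 + 1/2) by norm_num, Real.rpow_neg hk.le, Real.rpow_add hk,
      Real.rpow_one, ← Real.sqrt_eq_rpow]
  rw [h2, Real.sqrt_div Real.pi_nonneg, mul_inv]
  ring

lemma aux_outer (px : ℝ) (k : ℕ+) :
    (∫⁻ x : ℝ, ENNReal.ofReal (Real.exp (-(k : ℝ) * (x - px) ^ 2) * (k : ℝ)⁻¹)) =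
      ENNReal.ofReal (Real.sqrt Real.pi * (k : ℝ) ^ (-(3 : ℝ) / 2)) := by
  have hk : (0 : ℝ) < (k : ℝ) := by exact_mod_cast k.pos
  simp_rw [ENNReal.ofReal_mul (Real.exp_nonneg _)]
  rw [lintegral_mul_const _ (by fun_prop)]
  have hInt : Integrable (fun x : ℝ => Real.exp (-(k : ℝ) * (x - px) ^ 2)) :=
    (integrable_exp_neg_mul_sq hk).comp_sub_right px
  rw [← ofReal_integral_eq_lintegral_ofReal hInt (ae_of_all _ fun x => Real.exp_nonneg _)]
  rw [integral_sub_right_eq_self (fun x : ℝ => Real.exp (-(k : ℝ) * x ^ 2)) px,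
    integral_gaussian, ← ENNReal.ofReal_mul (Real.sqrt_nonneg _), aux_rpow]

lemma aux_k_bound (P px : ℝ) (k : ℕ+) :
    (∫⁻ q in {q : ℝ × ℝ | 0 < q.2 ∧ P + px ^ 2 - 2 * q.1 * px < q.2},
        ENNReal.ofReal (Real.exp (-(k : ℝ) * (q.1 ^ 2 + q.2 - P)))) ≤
      ENNReal.ofReal (Real.sqrt Real.pi * (k : ℝ) ^ (-(3 : ℝ) / 2)) := by
  set S : Set (ℝ × ℝ) := {q : ℝ × ℝ | 0 < q.2 ∧ P + px ^ 2 - 2 * q.1 * px < q.2} with hS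
  have hSm : MeasurableSet S := by
    rw [hS, Set.setOf_and]
    exact (measurableSet_lt measurable_const measurable_snd).inter
      (measurableSet_lt (by fun_prop) measurable_snd)
  have hfm : Measurable (fun q : ℝ × ℝ =>
      ENNReal.ofReal (Real.exp (-(k : ℝ) * (q.1 ^ 2 + q.2 - P)))) := by fun_prop
  rw [← lintegral_indicator hSm, Measure.volume_eq_prod,
    lintegral_prod _ ((hfm.indicator hSm).aemeasurable)]
  refine le_trans (lintegral_mono fun x => ?_) (le_of_eq (aux_outer px k))
  have hset : ∀ y : ℝ, S.indicator
        (fun q : ℝ × ℝ => ENNReal.ofReal (Real.exp (-(k : ℝ) * (q.1 ^ 2 + q.2 - P)))) (x, y)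
      = (Ioi (max 0 (P + px ^ 2 - 2 * x * px))).indicator
        (fun y : ℝ => ENNReal.ofReal (Real.exp (-(k : ℝ) * (x ^ 2 + y - P)))) y := by
    intro y
    rw [Set.indicator_apply, Set.indicator_apply]
    refine if_congr ?_ rfl rfl
    rw [mem_Ioi, max_lt_iff]
    exact Iff.rfl
  calc (∫⁻ y, S.indicator
        (fun q : ℝ × ℝ => ENNReal.ofReal (Real.exp (-(k : ℝ) * (q.1 ^ 2 + q.2 - P)))) (x, y))
      = ∫⁻ y in Ioi (max 0 (P + px ^ 2 - 2 * x * px)),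
          ENNReal.ofReal (Real.exp (-(k : ℝ) * (x ^ 2 + y - P))) := by
        rw [lintegral_congr hset, lintegral_indicator measurableSet_Ioi]
    _ ≤ _ := aux_inner P px x k

/-- The double integral `∬_{y>0, y > p² + p_x² - 2xp_x} (e^{x²+y-p²} - 1)⁻¹ dy dx`
is bounded by `√π ∑_{k≥1} k^{-3/2}`, uniformly in `p`. -/
theorem stmt_9 (px pr : ℝ) (hpr : 0 ≤ pr) :
    ∫ q in {q : ℝ × ℝ | 0 < q.2 ∧ (px ^ 2 + pr ^ 2) + px ^ 2 - 2 * q.1 * px < q.2},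
        1 / (Real.exp (q.1 ^ 2 + q.2 - (px ^ 2 + pr ^ 2)) - 1) ≤
      Real.sqrt Real.pi * ∑' k : ℕ+, (k : ℝ) ^ (-(3 : ℝ) / 2) := by
  set P : ℝ := px ^ 2 + pr ^ 2 with hP
  set S : Set (ℝ × ℝ) := {q : ℝ × ℝ | 0 < q.2 ∧ P + px ^ 2 - 2 * q.1 * px < q.2} with hS
  have hSm : MeasurableSet S := by
    rw [hS, Set.setOf_and]
    exact (measurableSet_lt measurable_const measurable_snd).inter
      (measurableSet_lt (by fun_prop) measurable_snd)
  have key : ∀ q ∈ S, 0 < q.1 ^ 2 + q.2 - P := by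
    rintro ⟨x, y⟩ ⟨h1, h2⟩
    simp only at h1 h2 ⊢
    nlinarith [sq_nonneg (x - px)]
  have hfm : Measurable (fun q : ℝ × ℝ => 1 / (Real.exp (q.1 ^ 2 + q.2 - P) - 1)) := by
    measurability
  have hsum : Summable (fun k : ℕ+ => (k : ℝ) ^ (-(3 : ℝ) / 2)) := by
    have h : Summable (fun n : ℕ => (n : ℝ) ^ (-(3 : ℝ) / 2)) :=
      Real.summable_nat_rpow.mpr (by norm_num)
    exact h.comp_injective PNat.coe_injective
  have hrhs : 0 ≤ Real.sqrt Real.pi * ∑' k : ℕ+, (k : ℝ) ^ (-(3 : ℝ) / 2) := by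
    apply mul_nonneg (Real.sqrt_nonneg _)
    exact tsum_nonneg fun k => Real.rpow_nonneg (by positivity) _
  rw [MeasureTheory.integral_eq_lintegral_of_nonneg_ae
    (ae_restrict_of_forall_mem hSm fun q hq => by
      have ht := key q hq
      have h1 : 1 < Real.exp (q.1 ^ 2 + q.2 - P) := Real.one_lt_exp_iff.mpr ht
      exact div_nonneg zero_le_one (by linarith))
    hfm.aestronglyMeasurable.restrict]
  apply ENNReal.toReal_le_of_le_ofReal hrhs
  have hptwise : ∀ q ∈ S, ENNReal.ofReal (1 / (Real.exp (q.1 ^ 2 + q.2 - P) - 1))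
      = ∑' k : ℕ+, ENNReal.ofReal (Real.exp (-(k : ℝ) * (q.1 ^ 2 + q.2 - P))) := by
    intro q hq
    have ht := key q hq
    rw [one_div, ← aux_tsum_exp ht,
      ENNReal.ofReal_tsum_of_nonneg (fun k => Real.exp_nonneg _) (aux_summable_exp ht)]
  rw [setLIntegral_congr_fun hSm hptwise,
    lintegral_tsum (fun k => by fun_prop)]
  refine le_trans (ENNReal.tsum_le_tsum fun k => aux_k_bound P px k) ?_
  rw [← ENNReal.ofReal_tsum_of_nonneg
    (fun k => mul_nonneg (Real.sqrt_nonneg _) (Real.rpow_nonneg (by positivity) _))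
    (hsum.mul_left _), tsum_mul_left]
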